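/- arXiv:2103.03286 — 2 statements merged into one kernel-verified Lean document; each statement's English description precedes it below -/
import Mathlib

section
/- The minimum of d_L(ℓ₁, ℓ₂) over all ℓ₁ ∈ L_a and ℓ₂ ∈ L_b equals |a - b|, attained at the pair (ℓ_a⁺, ℓ_b⁺). -/
open Set

/-- Membership in `L`: convex `ℓ : [0,1] → [0,1]` with `ℓ 0 = 0`, `ℓ 1 = 1`. -/
def MemLorenz (ℓ : ℝ → ℝ) : Prop :=
  ConvexOn ℝ (Icc (0:ℝ) 1) ℓ ∧ (∀ t ∈ Icc (0:ℝ) 1, ℓ t ∈ Icc (0:ℝ) 1) ∧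
    ℓ 0 = 0 ∧ ℓ 1 = 1

/-- The Gini index `G(ℓ) = 1 - 2∫₀¹ ℓ`. -/
noncomputable def Gini (ℓ : ℝ → ℝ) : ℝ := 1 - 2 * ∫ t in (0:ℝ)..1, ℓ t

/-- The curve `ℓ_a⁺`: `ℓ_a⁺(t) = (1-a)t` on `[0,1)` and `ℓ_a⁺(1) = 1`. -/
noncomputable def laPlus (a : ℝ) : ℝ → ℝ := fun t => if t = 1 then 1 else (1 - a) * t

lemma laPlus_ae (a : ℝ) : ∀ᵐ t : ℝ, laPlus a t = (1 - a) * t := by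
  have h : {t : ℝ | ¬ laPlus a t = (1 - a) * t} ⊆ {1} := by
    intro t ht
    simp only [mem_setOf_eq, laPlus] at ht
    rw [mem_singleton_iff]
    by_contra h1
    rw [if_neg h1] at ht
    exact ht rfl
  have := MeasureTheory.measure_mono_null h (Real.volume_singleton (a := 1))
  rw [MeasureTheory.ae_iff]
  exact this

lemma laPlus_integral (a : ℝ) : (∫ t in (0:ℝ)..1, laPlus a t) = (1 - a) / 2 := by
  have h : (∫ t in (0:ℝ)..1, laPlus a t) = ∫ t in (0:ℝ)..1, (1 - a) * t := by
    apply intervalIntegral.integral_congr_ae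
    filter_upwards [laPlus_ae a] with t ht _ using ht
  rw [h, intervalIntegral.integral_const_mul, integral_id]
  ring

lemma laPlus_gini (a : ℝ) : Gini (laPlus a) = a := by
  rw [Gini, laPlus_integral]; ring

lemma laPlus_mem (a : ℝ) (ha : a ∈ Icc (0:ℝ) 1) : MemLorenz (laPlus a) := by
  obtain ⟨ha0, ha1⟩ := ha
  have key : ∀ t ∈ Icc (0:ℝ) 1, (1 - a) * t ≤ laPlus a t := by
    intro t ht
    by_cases h1 : t = 1
    · simp [laPlus, h1]; nlinarith
    · simp [laPlus, h1]
  refine ⟨⟨convex_Icc _ _, ?_⟩, ?_, by simp [laPlus], by simp [laPlus]⟩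
  · intro x hx y hy p q hp hq hpq
    by_cases hxy : p • x + q • y = 1
    · -- then (p=0 ∨ x=1) ∧ (q=0 ∨ y=1)
      have hx1 : x ≤ 1 := hx.2
      have hy1 : y ≤ 1 := hy.2
      have h1 : p * x + q * y = 1 := hxy
      have hx' : p * x ≤ p * 1 := by nlinarith
      have hy' : q * y ≤ q * 1 := by nlinarith
      have hxe : p * x = p ∧ q * y = q := by constructor <;> nlinarith
      have : p * laPlus a x + q * laPlus a y ≥ p * ((1-a)*x) + q * ((1-a)*y) := by
        have := key x hx
        have := key y hy
        nlinarith
      have heq : p * ((1-a)*x) + q * ((1-a)*y) = 1 - a := by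
        have := hxe.1; have := hxe.2; nlinarith
      have hL : laPlus a (p • x + q • y) = 1 := by rw [hxy]; simp [laPlus]
      rw [hL]; simp only [smul_eq_mul]
      rcases eq_or_lt_of_le hp with hp0 | hp0
      · have hq1 : q = 1 := by linarith
        have hy1' : y = 1 := by nlinarith [hxe.2]
        simp [← hp0, hq1, hy1', laPlus]
      rcases eq_or_lt_of_le hq with hq0 | hq0
      · have hp1 : p = 1 := by linarith
        have hx1' : x = 1 := by nlinarith [hxe.1]
        simp [← hq0, hp1, hx1', laPlus]
      · have hx1' : x = 1 := by nlinarith [hxe.1]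
        have hy1' : y = 1 := by nlinarith [hxe.2]
        rw [hx1', hy1']
        have hone : laPlus a 1 = 1 := by simp [laPlus]
        rw [hone]
        linarith
    · have hxy' : p * x + q * y ≠ 1 := by simpa using hxy
      have hL : laPlus a (p • x + q • y) = (1 - a) * (p * x + q * y) := by
        simp only [smul_eq_mul, laPlus]
        rw [if_neg hxy']
      rw [hL]; simp only [smul_eq_mul]
      have h1 := key x hx
      have h2 := key y hy
      nlinarith
  · intro t ht
    by_cases h1 : t = 1
    · simp [laPlus, h1]
    · obtain ⟨ht0, ht1⟩ := ht
      simp only [laPlus, if_neg h1]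
      constructor <;> nlinarith

lemma memLorenz_integrable {ℓ : ℝ → ℝ} (h : MemLorenz ℓ) :
    IntervalIntegrable ℓ MeasureTheory.volume 0 1 := by
  obtain ⟨hconv, hmap, h0, h1⟩ := h
  rw [intervalIntegrable_iff_integrableOn_Ioo_of_le (by norm_num : (0:ℝ) ≤ 1)]
  have hconv' : ConvexOn ℝ (Ioo (0:ℝ) 1) ℓ :=
    hconv.subset Ioo_subset_Icc_self (convex_Ioo 0 1)
  have hcont : ContinuousOn ℓ (Ioo (0:ℝ) 1) := hconv'.continuousOn isOpen_Ioo
  refine MeasureTheory.Integrable.mono' (g := fun _ => (1:ℝ))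
    (MeasureTheory.integrable_const 1)
    (hcont.aestronglyMeasurable measurableSet_Ioo) ?_
  rw [MeasureTheory.ae_restrict_iff' measurableSet_Ioo]
  filter_upwards with t ht
  have := hmap t (Ioo_subset_Icc_self ht)
  rw [Real.norm_eq_abs, abs_le]
  exact ⟨by linarith [this.1], this.2⟩

lemma laPlus_dist (a b : ℝ) :
    (2 * ∫ t in (0:ℝ)..1, |laPlus a t - laPlus b t|) = |a - b| := by
  have h : (∫ t in (0:ℝ)..1, |laPlus a t - laPlus b t|)
      = ∫ t in (0:ℝ)..1, |a - b| * t := by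
    apply intervalIntegral.integral_congr_ae
    filter_upwards [laPlus_ae a, laPlus_ae b] with t hta htb htI
    rw [hta, htb]
    have ht0 : 0 < t := (Set.mem_Ioc.mp ((by simp [Set.uIoc_of_le] : Set.uIoc (0:ℝ) 1 = Ioc 0 1) ▸ htI)).1
    have : (1 - a) * t - (1 - b) * t = (b - a) * t := by ring
    rw [this, abs_mul, abs_of_pos ht0, abs_sub_comm]
  rw [h, intervalIntegral.integral_const_mul, integral_id]
  ring

/-- The minimum of `d_L(ℓ₁,ℓ₂)` over `ℓ₁ ∈ L_a`, `ℓ₂ ∈ L_b` equals `|a - b|`,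
attained at the pair `(ℓ_a⁺, ℓ_b⁺)`. -/
theorem lorenz_dist_isLeast (a b : ℝ) (ha : a ∈ Icc (0:ℝ) 1) (hb : b ∈ Icc (0:ℝ) 1) :
    IsLeast {d : ℝ | ∃ ℓ₁ ℓ₂ : ℝ → ℝ, MemLorenz ℓ₁ ∧ MemLorenz ℓ₂ ∧
        Gini ℓ₁ = a ∧ Gini ℓ₂ = b ∧ d = 2 * ∫ t in (0:ℝ)..1, |ℓ₁ t - ℓ₂ t|}
      |a - b| ∧
    (2 * ∫ t in (0:ℝ)..1, |laPlus a t - laPlus b t|) = |a - b| := by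
  refine ⟨⟨⟨laPlus a, laPlus b, laPlus_mem a ha, laPlus_mem b hb,
      laPlus_gini a, laPlus_gini b, (laPlus_dist a b).symm⟩, ?_⟩, laPlus_dist a b⟩
  rintro d ⟨ℓ₁, ℓ₂, h₁, h₂, hg₁, hg₂, rfl⟩
  have hi₁ := memLorenz_integrable h₁
  have hi₂ := memLorenz_integrable h₂
  have hI₁ : (∫ t in (0:ℝ)..1, ℓ₁ t) = (1 - a) / 2 := by
    have : (1:ℝ) - 2 * ∫ t in (0:ℝ)..1, ℓ₁ t = a := hg₁
    linarith
  have hI₂ : (∫ t in (0:ℝ)..1, ℓ₂ t) = (1 - b) / 2 := by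
    have : (1:ℝ) - 2 * ∫ t in (0:ℝ)..1, ℓ₂ t = b := hg₂
    linarith
  have hsub : (∫ t in (0:ℝ)..1, (ℓ₁ t - ℓ₂ t)) = (b - a) / 2 := by
    rw [intervalIntegral.integral_sub hi₁ hi₂, hI₁, hI₂]; ring
  have habs : |∫ t in (0:ℝ)..1, (ℓ₁ t - ℓ₂ t)| ≤ ∫ t in (0:ℝ)..1, |ℓ₁ t - ℓ₂ t| :=
    intervalIntegral.abs_integral_le_integral_abs (by norm_num)
  rw [hsub] at habs
  have : |a - b| = 2 * |(b - a) / 2| := by rw [abs_sub_comm]; rw [abs_div]; simp [abs_of_nonneg]; ring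
  rw [this]
  linarith
end

section
/- Suppose ℓ ∈ L_a, m ∈ L_b, and there exists t₀ ∈ (0,1) with ℓ ≤ m on [0,t₀] and ℓ ≥ m on [t₀,1]. Then 2∫₀¹ |ℓ - m| ≤ 2∫₀¹ |ℓ_a⁻ - ℓ_b⁺|. -/
open Set

/-- `ℓ_a⁻(t) = max {0, (t-a)/(1-a)}`. -/
noncomputable def laMinus (a : ℝ) : ℝ → ℝ := fun t => max 0 ((t - a) / (1 - a))

/-- `ℓ_b⁺(t) = (1-b)t` on `[0,1)`, `ℓ_b⁺(1) = 1`. -/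
noncomputable def lbPlus (b : ℝ) : ℝ → ℝ := fun t => if t = 1 then 1 else (1 - b) * t

set_option maxHeartbeats 1600000 in
/-- If `ℓ ∈ L_a`, `m ∈ L_b` and for some `t₀ ∈ (0,1)` we have `ℓ ≤ m` on
`[0,t₀]` and `ℓ ≥ m` on `[t₀,1]`, then
`2∫₀¹|ℓ - m| ≤ 2∫₀¹|ℓ_a⁻ - ℓ_b⁺|`. -/
theorem one_sign_switch_dist_le (ℓ m : ℝ → ℝ) (a b t₀ : ℝ)
    (hℓ : MemLorenz ℓ) (hm : MemLorenz m)
    (ha : Gini ℓ = a) (hb : Gini m = b)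
    (ht₀ : t₀ ∈ Ioo (0:ℝ) 1)
    (hle : ∀ t ∈ Icc (0:ℝ) t₀, ℓ t ≤ m t)
    (hge : ∀ t ∈ Icc t₀ (1:ℝ), m t ≤ ℓ t) :
    2 * ∫ t in (0:ℝ)..1, |ℓ t - m t| ≤
      2 * ∫ t in (0:ℝ)..1, |laMinus a t - lbPlus b t| := by
  obtain ⟨hℓc, hℓ01, hℓ0, hℓ1⟩ := hℓ
  obtain ⟨hmc, hm01, hm0, hm1⟩ := hm
  obtain ⟨ht₀0, ht₀1⟩ := ht₀
  have h0mem : (0:ℝ) ∈ Icc (0:ℝ) 1 := by norm_num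
  have h1mem : (1:ℝ) ∈ Icc (0:ℝ) 1 := by norm_num
  have ht₀mem : t₀ ∈ Icc (0:ℝ) 1 := ⟨le_of_lt ht₀0, le_of_lt ht₀1⟩
  have haI : ∫ t in (0:ℝ)..1, ℓ t = (1-a)/2 := by unfold Gini at ha; linarith
  have hbI : ∫ t in (0:ℝ)..1, m t = (1-b)/2 := by unfold Gini at hb; linarith
  -- three-point convexity helper
  have cvx : ∀ (f : ℝ → ℝ), ConvexOn ℝ (Icc (0:ℝ) 1) f → ∀ x ∈ Icc (0:ℝ) 1,
      ∀ y ∈ Icc (0:ℝ) 1, ∀ w₁ w₂ : ℝ, 0 ≤ w₁ → 0 ≤ w₂ → w₁ + w₂ = 1 →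
      f (w₁*x + w₂*y) ≤ w₁ * f x + w₂ * f y := by
    intro f hf x hx y hy w₁ w₂ h1 h2 hs
    simpa using hf.2 hx hy h1 h2 hs
  -- Lorenz curves are monotone on [0,1]
  have mono : ∀ (f : ℝ → ℝ), ConvexOn ℝ (Icc (0:ℝ) 1) f → f 0 = 0 →
      (∀ t ∈ Icc (0:ℝ) 1, f t ∈ Icc (0:ℝ) 1) → MonotoneOn f (Icc (0:ℝ) 1) := by
    intro f hf h0 hmem x hx y hy hxy
    by_cases hy0 : y = 0
    · have hx0 : x = 0 := le_antisymm (hy0 ▸ hxy) hx.1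
      rw [hx0, hy0]
    · have hypos : 0 < y := lt_of_le_of_ne hy.1 (Ne.symm hy0)
      have hd1 : x/y ≤ 1 := (div_le_one hypos).2 hxy
      have h3 := cvx f hf 0 h0mem y hy (1 - x/y) (x/y)
        (by linarith) (div_nonneg hx.1 hy.1) (by ring)
      have harg : (1 - x/y)*0 + (x/y)*y = x := by field_simp; ring
      rw [harg, h0] at h3
      have hfy : 0 ≤ f y := (hmem y hy).1
      nlinarith
  have hℓmono := mono ℓ hℓc hℓ0 hℓ01
  have hmmono := mono m hmc hm0 hm01
  have hsub : ∀ u v : ℝ, u ∈ Icc (0:ℝ) 1 → v ∈ Icc (0:ℝ) 1 → uIcc u v ⊆ Icc (0:ℝ) 1 := by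
    intro u v hu hv t ht
    exact ⟨le_trans (le_min hu.1 hv.1) ht.1, le_trans ht.2 (max_le hu.2 hv.2)⟩
  have hIℓ : ∀ u v : ℝ, u ∈ Icc (0:ℝ) 1 → v ∈ Icc (0:ℝ) 1 →
      IntervalIntegrable ℓ MeasureTheory.volume u v :=
    fun u v hu hv => (hℓmono.mono (hsub u v hu hv)).intervalIntegrable
  have hIm : ∀ u v : ℝ, u ∈ Icc (0:ℝ) 1 → v ∈ Icc (0:ℝ) 1 →
      IntervalIntegrable m MeasureTheory.volume u v :=
    fun u v hu hv => (hmmono.mono (hsub u v hu hv)).intervalIntegrable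
  have hℓnn : ∀ t ∈ Icc (0:ℝ) 1, 0 ≤ ℓ t := fun t ht => (hℓ01 t ht).1
  -- a ≤ 1
  have ha1 : a ≤ 1 := by
    have h : (0:ℝ) ≤ ∫ t in (0:ℝ)..1, ℓ t :=
      intervalIntegral.integral_nonneg (by norm_num : (0:ℝ) ≤ 1) hℓnn
    rw [haI] at h; linarith
  -- ℓ t ≤ t on [0,1], hence 0 ≤ a
  have hℓle : ∀ t ∈ Icc (0:ℝ) 1, ℓ t ≤ t := by
    intro t ht
    have h3 := cvx ℓ hℓc 0 h0mem 1 h1mem (1-t) t (by linarith [ht.2]) ht.1 (by ring)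
    have harg : (1-t)*0 + t*1 = t := by ring
    rw [harg, hℓ0, hℓ1] at h3
    nlinarith
  have ha0 : 0 ≤ a := by
    have h := intervalIntegral.integral_mono_on (by norm_num : (0:ℝ) ≤ 1)
      (hIℓ 0 1 h0mem h1mem) intervalIntegral.intervalIntegrable_id hℓle
    rw [haI, integral_id] at h
    norm_num at h; linarith
  -- laMinus facts
  have hLaMono : Monotone (laMinus a) := by
    intro x y hxy
    unfold laMinus
    apply max_le_max le_rfl
    rw [div_eq_mul_inv, div_eq_mul_inv]
    exact mul_le_mul_of_nonneg_right (by linarith) (inv_nonneg.2 (by linarith))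
  have hILa : ∀ u v : ℝ, IntervalIntegrable (laMinus a) MeasureTheory.volume u v :=
    fun u v => hLaMono.intervalIntegrable
  have hLa0 : ∀ t : ℝ, t ≤ a → laMinus a t = 0 := by
    intro t ht
    unfold laMinus
    exact max_eq_left (div_nonpos_iff.mpr (Or.inr ⟨by linarith, by linarith⟩))
  have hLaEq : ∀ t : ℝ, a ≤ t → laMinus a t = (t-a)/(1-a) := by
    intro t ht
    unfold laMinus
    exact max_eq_right (div_nonneg (by linarith) (by linarith))
  -- linear integrals
  have hlinInt : ∀ u v : ℝ, IntervalIntegrable (fun t => (1-b)*t) MeasureTheory.volume u v :=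
    fun u v => (continuous_const.mul continuous_id).intervalIntegrable u v
  have hlin : ∀ u v : ℝ, ∫ t in u..v, (1-b)*t = (1-b)*(v^2-u^2)/2 := by
    intro u v
    rw [intervalIntegral.integral_const_mul, integral_id]; ring
  -- total integral of laMinus
  have hPall : ∫ t in (0:ℝ)..1, laMinus a t = (1-a)/2 := by
    rcases eq_or_lt_of_le ha1 with h1 | h1
    · have hz : ∀ t : ℝ, laMinus a t = 0 := by
        intro t; unfold laMinus; rw [h1]; norm_num
      simp only [hz]
      rw [h1]
      norm_num
    · have hne : (1:ℝ) - a ≠ 0 := by linarith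
      rw [← intervalIntegral.integral_add_adjacent_intervals (hILa 0 a) (hILa a 1)]
      have e1 : ∫ t in (0:ℝ)..a, laMinus a t = 0 := by
        rw [intervalIntegral.integral_congr (g := fun _ => (0:ℝ))]
        · simp
        · intro t ht
          rw [uIcc_of_le ha0] at ht
          exact hLa0 t ht.2
      have e2 : ∫ t in a..1, laMinus a t = ∫ t in a..1, (t-a)/(1-a) := by
        apply intervalIntegral.integral_congr
        intro t ht
        rw [uIcc_of_le ha1] at ht
        exact hLaEq t ht.1
      rw [e1, e2, intervalIntegral.integral_div,
        intervalIntegral.integral_sub intervalIntegral.intervalIntegrable_id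
          (intervalIntegrable_const (c := a)),
        integral_id, intervalIntegral.integral_const]
      rw [smul_eq_mul]
      field_simp
      ring
  -- replace lbPlus by the linear function (a.e. equal)
  have hne1 : ∀ᵐ t : ℝ, t ≠ (1:ℝ) := by
    rw [MeasureTheory.ae_iff]
    have : {t : ℝ | ¬ t ≠ 1} = {(1:ℝ)} := by ext t; simp
    rw [this]
    exact Real.volume_singleton
  have hQint : ∀ u v : ℝ, ∫ t in u..v, lbPlus b t = ∫ t in u..v, (1-b)*t := by
    intro u v
    apply intervalIntegral.integral_congr_ae
    filter_upwards [hne1] with t ht _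
    simp [lbPlus, ht]
  have hQabs : ∫ t in (0:ℝ)..1, |laMinus a t - lbPlus b t|
      = ∫ t in (0:ℝ)..1, |laMinus a t - (1-b)*t| := by
    apply intervalIntegral.integral_congr_ae
    filter_upwards [hne1] with t ht _
    simp [lbPlus, ht]
  -- Claim A : ∫₀ᵗ⁰ m ≤ (1-b) t₀²/2
  have claimA : ∫ t in (0:ℝ)..t₀, m t ≤ (1-b)*t₀^2/2 := by
    by_cases hc : m t₀ ≤ (1-b)*t₀
    · have hptw : ∀ t ∈ Icc (0:ℝ) t₀, m t ≤ (1-b)*t := by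
        intro t ht
        by_cases ht0 : t = 0
        · subst ht0; rw [hm0]; norm_num
        · have htpos : 0 < t := lt_of_le_of_ne ht.1 (Ne.symm ht0)
          have h3 := cvx m hmc 0 h0mem t₀ ht₀mem (1 - t/t₀) (t/t₀)
            (by rw [sub_nonneg]; exact (div_le_one ht₀0).2 ht.2)
            (div_nonneg ht.1 (le_of_lt ht₀0)) (by ring)
          have harg : (1 - t/t₀)*0 + (t/t₀)*t₀ = t := by field_simp; ring
          rw [harg, hm0] at h3
          have h4 : (t/t₀) * m t₀ ≤ (t/t₀) * ((1-b)*t₀) :=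
            mul_le_mul_of_nonneg_left hc (div_nonneg ht.1 (le_of_lt ht₀0))
          have he : (t/t₀)*((1-b)*t₀) = (1-b)*t := by field_simp <;> ring
          nlinarith
      calc ∫ t in (0:ℝ)..t₀, m t ≤ ∫ t in (0:ℝ)..t₀, (1-b)*t :=
            intervalIntegral.integral_mono_on (le_of_lt ht₀0)
              (hIm 0 t₀ h0mem ht₀mem) (hlinInt 0 t₀) hptw
        _ = (1-b)*t₀^2/2 := by rw [hlin]; ring
    · push_neg at hc
      have hptw : ∀ t ∈ Icc t₀ (1:ℝ), (1-b)*t ≤ m t := by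
        intro t ht
        have htpos : 0 < t := lt_of_lt_of_le ht₀0 ht.1
        have h3 := cvx m hmc 0 h0mem t ⟨le_of_lt htpos, ht.2⟩ (1 - t₀/t) (t₀/t)
          (by rw [sub_nonneg]; exact (div_le_one htpos).2 ht.1)
          (div_nonneg (le_of_lt ht₀0) (le_of_lt htpos)) (by ring)
        have harg : (1 - t₀/t)*0 + (t₀/t)*t = t₀ := by field_simp; ring
        rw [harg, hm0] at h3
        -- h3 : m t₀ ≤ (1 - t₀/t)*0 + (t₀/t) * m t
        have h3' : m t₀ * t ≤ t₀ * m t := by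
          rw [show (1 - t₀/t)*0 + (t₀/t) * m t = (t₀ * m t)/t by ring] at h3
          exact (le_div_iff₀ htpos).mp h3
        have k : ((1-b)*t) * t₀ ≤ (m t) * t₀ := by
          nlinarith [mul_lt_mul_of_pos_right hc htpos]
        exact le_of_mul_le_mul_right k ht₀0
      have key : ∫ t in t₀..1, (1-b)*t ≤ ∫ t in t₀..1, m t :=
        intervalIntegral.integral_mono_on (le_of_lt ht₀1)
          (hlinInt t₀ 1) (hIm t₀ 1 ht₀mem h1mem) hptw
      rw [hlin] at key
      have hsplit := intervalIntegral.integral_add_adjacent_intervals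
        (hIm 0 t₀ h0mem ht₀mem) (hIm t₀ 1 ht₀mem h1mem)
      rw [hbI] at hsplit
      nlinarith
  -- Claim B : ∫₀ᵗ⁰ laMinus ≤ ∫₀ᵗ⁰ ℓ
  have claimB : ∫ t in (0:ℝ)..t₀, laMinus a t ≤ ∫ t in (0:ℝ)..t₀, ℓ t := by
    rcases le_or_gt t₀ a with hta | hta
    · have e : ∫ t in (0:ℝ)..t₀, laMinus a t = 0 := by
        rw [intervalIntegral.integral_congr (g := fun _ => (0:ℝ))]
        · simp
        · intro t ht
          rw [uIcc_of_le (le_of_lt ht₀0)] at ht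
          exact hLa0 t (le_trans ht.2 hta)
      rw [e]
      exact intervalIntegral.integral_nonneg (le_of_lt ht₀0)
        (fun t ht => hℓnn t ⟨ht.1, le_trans ht.2 (le_of_lt ht₀1)⟩)
    · have ha1' : a < 1 := lt_trans hta ht₀1
      have hne : (1:ℝ) - a ≠ 0 := by linarith
      have hnet : (1:ℝ) - t₀ ≠ 0 := by linarith
      by_cases hc : ℓ t₀ ≤ (t₀ - a)/(1-a)
      · have hptw : ∀ t ∈ Icc t₀ (1:ℝ), ℓ t ≤ laMinus a t := by
          intro t ht
          have h3 := cvx ℓ hℓc t₀ ht₀mem 1 h1mem ((1-t)/(1-t₀)) ((t-t₀)/(1-t₀))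
            (div_nonneg (by linarith [ht.2]) (by linarith))
            (div_nonneg (by linarith [ht.1]) (by linarith))
            (by field_simp; ring)
          have harg : ((1-t)/(1-t₀))*t₀ + ((t-t₀)/(1-t₀))*1 = t := by field_simp <;> ring
          rw [harg, hℓ1] at h3
          rw [hLaEq t (le_trans (le_of_lt hta) ht.1)]
          have h4 : ((1-t)/(1-t₀)) * ℓ t₀ ≤ ((1-t)/(1-t₀)) * ((t₀-a)/(1-a)) :=
            mul_le_mul_of_nonneg_left hc (div_nonneg (by linarith [ht.2]) (by linarith))
          have he : ((1-t)/(1-t₀))*((t₀-a)/(1-a)) + ((t-t₀)/(1-t₀))*1 = (t-a)/(1-a) := by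
            field_simp
            ring
          linarith
        have key : ∫ t in t₀..1, ℓ t ≤ ∫ t in t₀..1, laMinus a t :=
          intervalIntegral.integral_mono_on (le_of_lt ht₀1)
            (hIℓ t₀ 1 ht₀mem h1mem) (hILa t₀ 1) hptw
        have s1 := intervalIntegral.integral_add_adjacent_intervals
          (hIℓ 0 t₀ h0mem ht₀mem) (hIℓ t₀ 1 ht₀mem h1mem)
        have s2 := intervalIntegral.integral_add_adjacent_intervals
          (hILa 0 t₀) (hILa t₀ 1)
        rw [haI] at s1; rw [hPall] at s2
        linarith
      · push_neg at hc
        have hptw : ∀ t ∈ Icc (0:ℝ) t₀, laMinus a t ≤ ℓ t := by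
          intro t ht
          have htlt1 : t < 1 := lt_of_le_of_lt ht.2 ht₀1
          have hnett : (1:ℝ) - t ≠ 0 := by linarith
          have h3 := cvx ℓ hℓc t ⟨ht.1, le_of_lt htlt1⟩ 1 h1mem
            ((1-t₀)/(1-t)) ((t₀-t)/(1-t))
            (div_nonneg (by linarith) (by linarith))
            (div_nonneg (by linarith [ht.2]) (by linarith))
            (by field_simp; ring)
          have harg : ((1-t₀)/(1-t))*t + ((t₀-t)/(1-t))*1 = t₀ := by field_simp <;> ring
          rw [harg, hℓ1] at h3
          -- h3 : ℓ t₀ ≤ ((1-t₀)/(1-t)) * ℓ t + ((t₀-t)/(1-t)) * 1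
          unfold laMinus
          apply max_le (hℓnn t ⟨ht.1, le_of_lt htlt1⟩)
          rw [div_le_iff₀ (by linarith : (0:ℝ) < 1-a)]
          have hc' : t₀ - a < ℓ t₀ * (1-a) := by
            rw [div_lt_iff₀ (by linarith : (0:ℝ) < 1-a)] at hc; exact hc
          have h3' : ℓ t₀ * (1-t) ≤ (1-t₀) * ℓ t + (t₀ - t) := by
            rw [show ((1-t₀)/(1-t)) * ℓ t + ((t₀-t)/(1-t)) * 1
                = ((1-t₀) * ℓ t + (t₀ - t))/(1-t) by ring] at h3
            exact (le_div_iff₀ (by linarith : (0:ℝ) < 1-t)).mp h3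
          have k1 := mul_lt_mul_of_pos_right hc' (show (0:ℝ) < 1 - t by linarith)
          have k2 := mul_le_mul_of_nonneg_right h3' (show (0:ℝ) ≤ 1-a by linarith)
          have e1 : (t₀ - a) * (1-t) = (t-a)*(1-t₀) + (t₀-t)*(1-a) := by ring
          have e2 : (ℓ t₀ * (1-a))*(1-t) = (ℓ t₀ * (1-t))*(1-a) := by ring
          have e3 : ((1-t₀)*ℓ t + (t₀-t))*(1-a)
              = (ℓ t *(1-a))*(1-t₀) + (t₀-t)*(1-a) := by ring
          have k3 : (t - a) * (1 - t₀) ≤ (ℓ t * (1-a)) * (1 - t₀) := by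
            linarith [k1, k2, e1, e2, e3]
          exact le_of_mul_le_mul_right k3 (by linarith : (0:ℝ) < 1 - t₀)
        exact intervalIntegral.integral_mono_on (le_of_lt ht₀0)
          (hILa 0 t₀) (hIℓ 0 t₀ h0mem ht₀mem) hptw
  -- rewrite LHS
  have hIℓm : ∀ u v : ℝ, u ∈ Icc (0:ℝ) 1 → v ∈ Icc (0:ℝ) 1 →
      IntervalIntegrable (fun t => |ℓ t - m t|) MeasureTheory.volume u v :=
    fun u v hu hv => ((hIℓ u v hu hv).sub (hIm u v hu hv)).abs
  have hIabs : ∀ u v : ℝ, IntervalIntegrable (fun t => |laMinus a t - (1-b)*t|)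
      MeasureTheory.volume u v :=
    fun u v => ((hILa u v).sub (hlinInt u v)).abs
  have L1 : ∫ t in (0:ℝ)..t₀, |ℓ t - m t|
      = (∫ t in (0:ℝ)..t₀, m t) - ∫ t in (0:ℝ)..t₀, ℓ t := by
    rw [intervalIntegral.integral_congr (g := fun t => m t - ℓ t)]
    · exact intervalIntegral.integral_sub (hIm 0 t₀ h0mem ht₀mem) (hIℓ 0 t₀ h0mem ht₀mem)
    · intro t ht
      rw [uIcc_of_le (le_of_lt ht₀0)] at ht
      show |ℓ t - m t| = m t - ℓ t
      rw [abs_sub_comm]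
      exact abs_of_nonneg (sub_nonneg.2 (hle t ht))
  have L2 : ∫ t in t₀..1, |ℓ t - m t|
      = (∫ t in t₀..1, ℓ t) - ∫ t in t₀..1, m t := by
    rw [intervalIntegral.integral_congr (g := fun t => ℓ t - m t)]
    · exact intervalIntegral.integral_sub (hIℓ t₀ 1 ht₀mem h1mem) (hIm t₀ 1 ht₀mem h1mem)
    · intro t ht
      rw [uIcc_of_le (le_of_lt ht₀1)] at ht
      exact abs_of_nonneg (sub_nonneg.2 (hge t ht))
  -- RHS lower bounds
  have R1 : ((1-b)*t₀^2/2) - (∫ t in (0:ℝ)..t₀, laMinus a t)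
      ≤ ∫ t in (0:ℝ)..t₀, |laMinus a t - (1-b)*t| := by
    have h := intervalIntegral.integral_mono_on (le_of_lt ht₀0)
      ((hlinInt 0 t₀).sub (hILa 0 t₀)) (hIabs 0 t₀)
      (fun t _ => by
        calc (1-b)*t - laMinus a t = -(laMinus a t - (1-b)*t) := by ring
          _ ≤ |laMinus a t - (1-b)*t| := neg_le_abs _)
    rw [intervalIntegral.integral_sub (hlinInt 0 t₀) (hILa 0 t₀), hlin] at h
    calc ((1-b)*t₀^2/2) - (∫ t in (0:ℝ)..t₀, laMinus a t)
        = (1-b)*(t₀^2-0^2)/2 - (∫ t in (0:ℝ)..t₀, laMinus a t) := by ring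
      _ ≤ _ := h
  have R2 : (∫ t in t₀..1, laMinus a t) - ((1-b)*(1-t₀^2)/2)
      ≤ ∫ t in t₀..1, |laMinus a t - (1-b)*t| := by
    have h := intervalIntegral.integral_mono_on (le_of_lt ht₀1)
      ((hILa t₀ 1).sub (hlinInt t₀ 1)) (hIabs t₀ 1)
      (fun t _ => le_abs_self _)
    rw [intervalIntegral.integral_sub (hILa t₀ 1) (hlinInt t₀ 1), hlin] at h
    calc (∫ t in t₀..1, laMinus a t) - ((1-b)*(1-t₀^2)/2)
        = (∫ t in t₀..1, laMinus a t) - (1-b)*(1^2-t₀^2)/2 := by ring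
      _ ≤ _ := h
  -- splits
  have sℓ := intervalIntegral.integral_add_adjacent_intervals
    (hIℓ 0 t₀ h0mem ht₀mem) (hIℓ t₀ 1 ht₀mem h1mem)
  have sm := intervalIntegral.integral_add_adjacent_intervals
    (hIm 0 t₀ h0mem ht₀mem) (hIm t₀ 1 ht₀mem h1mem)
  have sLa := intervalIntegral.integral_add_adjacent_intervals
    (hILa 0 t₀) (hILa t₀ 1)
  rw [haI] at sℓ; rw [hbI] at sm; rw [hPall] at sLa
  rw [hQabs,
    ← intervalIntegral.integral_add_adjacent_intervals (hIℓm 0 t₀ h0mem ht₀mem) (hIℓm t₀ 1 ht₀mem h1mem),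
    ← intervalIntegral.integral_add_adjacent_intervals (hIabs 0 t₀) (hIabs t₀ 1),
    L1, L2]
  have qsum : (1-b)*t₀^2/2 + (1-b)*(1-t₀^2)/2 = (1-b)/2 := by ring
  linarith
end
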